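/- Let N₁, N₂ be finite-dimensional subspaces of a real separable Hilbert space H of dimensions d₁ ≥ 1 and d₂ ≥ 1, with orthonormal bases {ζ_{11},…,ζ_{1d₁}} and {ζ_{21},…,ζ_{2d₂}}, and define D̃(N₁, N₂) = sqrt(1 − (1/max(d₁,d₂)) Σ_{k=1}^{d₁} Σ_{j=1}^{d₂} ⟨ζ_{2j}, ζ_{1k}⟩²). Then: (a) D̃(N₁, N₂) ∈ [0, 1]; (b) D̃(N₁, N₂) = 0 if and only if N₁ = N₂; (c) D̃(N₁, N₂) = 1 if and only if N₁ ⊥ N₂, i.e. ⟨x, y⟩ = 0 for all x ∈ N₁, y ∈ N₂; and (d) if d₁ = d₂ = d then D̃(N₁, N₂) = D(N₁, N₂), where D(N₁, N₂) = sqrt(1 − (1/d) Σ_{j,k=1}^d ⟨ζ_{2j}, ζ_{1k}⟩²). -/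

import Mathlib

open scoped RealInnerProductSpace

section Aux
variable {H : Type*} [NormedAddCommGroup H] [InnerProductSpace ℝ H]

private lemma bessel_identity' (n : ℕ) (v : Fin n → H) (hv : Orthonormal ℝ v) (x : H) :
    ‖x - ∑ i, ⟪v i, x⟫ • v i‖ ^ 2 = ‖x‖ ^ 2 - ∑ i, ⟪v i, x⟫ ^ 2 := by
  have hy : ‖∑ i, ⟪v i, x⟫ • v i‖ ^ 2 = ∑ i, ⟪v i, x⟫ ^ 2 := by
    rw [← real_inner_self_eq_norm_sq, inner_sum]
    simp [inner_smul_right, hv.inner_right_fintype, hv.inner_left_fintype, sq]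
  have hxy : ⟪x, ∑ i, ⟪v i, x⟫ • v i⟫ = ∑ i, ⟪v i, x⟫ ^ 2 := by
    rw [inner_sum]
    simp [inner_smul_right, real_inner_comm x, sq]
  rw [@norm_sub_sq_real, hy, hxy]; ring

private lemma bessel_le' (n : ℕ) (v : Fin n → H) (hv : Orthonormal ℝ v) (x : H) :
    ∑ i, ⟪v i, x⟫ ^ 2 ≤ ‖x‖ ^ 2 := by
  have := bessel_identity' n v hv x
  nlinarith [sq_nonneg ‖x - ∑ i, ⟪v i, x⟫ • v i‖]

private lemma bessel_eq_iff' (n : ℕ) (v : Fin n → H) (hv : Orthonormal ℝ v) (x : H) :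
    ∑ i, ⟪v i, x⟫ ^ 2 = ‖x‖ ^ 2 ↔ x ∈ Submodule.span ℝ (Set.range v) := by
  constructor
  · intro h
    have h2 : ‖x - ∑ i, ⟪v i, x⟫ • v i‖ ^ 2 = 0 := by
      rw [bessel_identity' n v hv x, h]; ring
    have h3 : x = ∑ i, ⟪v i, x⟫ • v i := by
      have := pow_eq_zero_iff (n := 2) (by norm_num) |>.mp h2
      rw [norm_eq_zero, sub_eq_zero] at this
      exact this
    rw [h3]
    exact Submodule.sum_mem _ fun i _ => Submodule.smul_mem _ _
      (Submodule.subset_span ⟨i, rfl⟩)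
  · intro h
    rw [Finsupp.mem_span_range_iff_exists_finsupp] at h
    obtain ⟨c, hc⟩ := h
    have hx : x = ∑ i, c i • v i := by
      rw [← hc, Finsupp.sum_fintype]; intro; simp
    have hci : ∀ i, ⟪v i, x⟫ = c i := by
      intro i; rw [hx, hv.inner_right_fintype]
    have hnx : ‖x‖ ^ 2 = ∑ i, c i ^ 2 := by
      rw [← real_inner_self_eq_norm_sq, hx, sum_inner]
      congr 1; funext i
      rw [inner_smul_left, ← hx, RCLike.conj_to_real, hci i, sq]
    rw [hnx]
    exact Finset.sum_congr rfl fun i _ => by rw [hci i]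

end Aux

/-- The modified discrepancy
`D̃(N₁,N₂) = sqrt(1 − (1/max(d₁,d₂)) Σ_{k,j} ⟪ζ_{2j}, ζ_{1k}⟫²)` between
subspaces of possibly different dimensions `d₁`, `d₂`, computed from orthonormal
bases `ζ₁ : Fin d₁ → H` and `ζ₂ : Fin d₂ → H`. -/
noncomputable def discrDTilde {H : Type*} [NormedAddCommGroup H] [InnerProductSpace ℝ H]
    (d₁ d₂ : ℕ) (ζ₁ : Fin d₁ → H) (ζ₂ : Fin d₂ → H) : ℝ :=
  Real.sqrt (1 - (1 / (max d₁ d₂ : ℝ)) *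
    ∑ k : Fin d₁, ∑ j : Fin d₂, ⟪ζ₂ j, ζ₁ k⟫ ^ 2)

/-- The discrepancy `D(N₁, N₂)` between `d`-dimensional subspaces. -/
noncomputable def discrD {H : Type*} [NormedAddCommGroup H] [InnerProductSpace ℝ H]
    (d : ℕ) (ζ₁ ζ₂ : Fin d → H) : ℝ :=
  Real.sqrt (1 - (1 / (d : ℝ)) * ∑ j : Fin d, ∑ k : Fin d, ⟪ζ₂ j, ζ₁ k⟫ ^ 2)

/-- Properties of the modified discrepancy measure `D̃` (Section 4.1):
it takes values in `[0,1]`, vanishes iff the subspaces coincide, equals `1` iff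
the subspaces are orthogonal, and reduces to `D` when `d₁ = d₂`. -/
theorem stmt8
    {H : Type*} [NormedAddCommGroup H] [InnerProductSpace ℝ H]
    [TopologicalSpace.SeparableSpace H]
    (d₁ d₂ : ℕ) (hd₁ : 1 ≤ d₁) (hd₂ : 1 ≤ d₂)
    (ζ₁ : Fin d₁ → H) (ζ₂ : Fin d₂ → H)
    (hζ₁ : Orthonormal ℝ ζ₁) (hζ₂ : Orthonormal ℝ ζ₂)
    (N₁ N₂ : Submodule ℝ H)
    (hN₁ : N₁ = Submodule.span ℝ (Set.range ζ₁))
    (hN₂ : N₂ = Submodule.span ℝ (Set.range ζ₂)) :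
    -- (a) values in [0,1]
    (0 ≤ discrDTilde d₁ d₂ ζ₁ ζ₂ ∧ discrDTilde d₁ d₂ ζ₁ ζ₂ ≤ 1) ∧
    -- (b) D̃ = 0 iff N₁ = N₂
    (discrDTilde d₁ d₂ ζ₁ ζ₂ = 0 ↔ N₁ = N₂) ∧
    -- (c) D̃ = 1 iff N₁ ⟂ N₂
    (discrDTilde d₁ d₂ ζ₁ ζ₂ = 1 ↔ ∀ x ∈ N₁, ∀ y ∈ N₂, ⟪x, y⟫ = 0) ∧
    -- (d) when d₁ = d₂ = d, D̃ coincides with D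
    (∀ (h : d₁ = d₂),
      discrDTilde d₁ d₂ ζ₁ ζ₂ = discrD d₂ (fun j => ζ₁ (Fin.cast h.symm j)) ζ₂) := by
  set S : ℝ := ∑ k : Fin d₁, ∑ j : Fin d₂, ⟪ζ₂ j, ζ₁ k⟫ ^ 2 with hSdef
  have hSswap : S = ∑ j : Fin d₂, ∑ k : Fin d₁, ⟪ζ₁ k, ζ₂ j⟫ ^ 2 := by
    rw [hSdef, Finset.sum_comm]
    exact Finset.sum_congr rfl fun j _ => Finset.sum_congr rfl fun k _ => by
      rw [real_inner_comm]
  have hS0 : 0 ≤ S :=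
    Finset.sum_nonneg fun k _ => Finset.sum_nonneg fun j _ => sq_nonneg _
  have ht₁ : ∀ k, ∑ j, ⟪ζ₂ j, ζ₁ k⟫ ^ 2 ≤ 1 := fun k => by
    have := bessel_le' d₂ ζ₂ hζ₂ (ζ₁ k)
    rwa [hζ₁.1 k, one_pow] at this
  have ht₂ : ∀ j, ∑ k, ⟪ζ₁ k, ζ₂ j⟫ ^ 2 ≤ 1 := fun j => by
    have := bessel_le' d₁ ζ₁ hζ₁ (ζ₂ j)
    rwa [hζ₂.1 j, one_pow] at this
  have hSd₁ : S ≤ (d₁ : ℝ) := by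
    calc S ≤ ∑ _k : Fin d₁, (1 : ℝ) := Finset.sum_le_sum fun k _ => ht₁ k
    _ = d₁ := by simp
  have hSd₂ : S ≤ (d₂ : ℝ) := by
    rw [hSswap]
    calc (∑ j : Fin d₂, ∑ k : Fin d₁, ⟪ζ₁ k, ζ₂ j⟫ ^ 2) ≤ ∑ _j : Fin d₂, (1 : ℝ) :=
      Finset.sum_le_sum fun j _ => ht₂ j
    _ = d₂ := by simp
  set m : ℝ := (max d₁ d₂ : ℝ) with hmdef
  have hm1 : (1 : ℝ) ≤ m := by
    rw [hmdef]; push_cast; exact le_max_of_le_left (by exact_mod_cast hd₁)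
  have hm0 : (0 : ℝ) < m := lt_of_lt_of_le one_pos hm1
  have hd₁m : (d₁ : ℝ) ≤ m := by rw [hmdef]; push_cast; exact le_max_left _ _
  have hd₂m : (d₂ : ℝ) ≤ m := by rw [hmdef]; push_cast; exact le_max_right _ _
  have hSm : S ≤ m := le_trans hSd₁ hd₁m
  have harg0 : 0 ≤ 1 - (1 / m) * S := by
    rw [sub_nonneg]
    calc (1 / m) * S ≤ (1 / m) * m := by
          apply mul_le_mul_of_nonneg_left hSm; positivity
    _ = 1 := by field_simp
  have harg1 : 1 - (1 / m) * S ≤ 1 := by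
    have : 0 ≤ (1 / m) * S := mul_nonneg (by positivity) hS0
    linarith
  have hDdef : discrDTilde d₁ d₂ ζ₁ ζ₂ = Real.sqrt (1 - (1 / m) * S) := rfl
  refine ⟨⟨Real.sqrt_nonneg _, ?_⟩, ?_, ?_, ?_⟩
  · rw [hDdef]
    exact Real.sqrt_le_one.mpr harg1
  · -- (b)
    rw [hDdef]
    rw [show (Real.sqrt (1 - (1 / m) * S) = 0 ↔ S = m) from ?_]
    · constructor
      · intro hSm'
        have hS₁ : S = (d₁ : ℝ) := le_antisymm hSd₁ (by rw [hSm']; exact hd₁m)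
        have hS₂ : S = (d₂ : ℝ) := le_antisymm hSd₂ (by rw [hSm']; exact hd₂m)
        have hall₁ : ∀ k, ∑ j, ⟪ζ₂ j, ζ₁ k⟫ ^ 2 = 1 := by
          intro k
          by_contra hne
          have hlt : ∑ j, ⟪ζ₂ j, ζ₁ k⟫ ^ 2 < 1 := lt_of_le_of_ne (ht₁ k) hne
          have : S < ∑ _k : Fin d₁, (1 : ℝ) :=
            Finset.sum_lt_sum (fun i _ => ht₁ i) ⟨k, Finset.mem_univ k, hlt⟩
          simp only [Finset.sum_const, Finset.card_univ, Fintype.card_fin,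
            nsmul_eq_mul, mul_one] at this
          exact absurd hS₁ (ne_of_lt this)
        have hall₂ : ∀ j, ∑ k, ⟪ζ₁ k, ζ₂ j⟫ ^ 2 = 1 := by
          intro j
          by_contra hne
          have hlt : ∑ k, ⟪ζ₁ k, ζ₂ j⟫ ^ 2 < 1 := lt_of_le_of_ne (ht₂ j) hne
          have : (∑ j : Fin d₂, ∑ k : Fin d₁, ⟪ζ₁ k, ζ₂ j⟫ ^ 2) < ∑ _j : Fin d₂, (1 : ℝ) :=
            Finset.sum_lt_sum (fun i _ => ht₂ i) ⟨j, Finset.mem_univ j, hlt⟩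
          rw [← hSswap] at this
          simp only [Finset.sum_const, Finset.card_univ, Fintype.card_fin,
            nsmul_eq_mul, mul_one] at this
          exact absurd hS₂ (ne_of_lt this)
        have hsub₁ : N₁ ≤ N₂ := by
          rw [hN₁, hN₂, Submodule.span_le]
          rintro _ ⟨k, rfl⟩
          exact (bessel_eq_iff' d₂ ζ₂ hζ₂ (ζ₁ k)).mp
            (by rw [hall₁ k, hζ₁.1 k, one_pow])
        have hsub₂ : N₂ ≤ N₁ := by
          rw [hN₁, hN₂, Submodule.span_le]
          rintro _ ⟨j, rfl⟩
          exact (bessel_eq_iff' d₁ ζ₁ hζ₁ (ζ₂ j)).mp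
            (by rw [hall₂ j, hζ₂.1 j, one_pow])
        exact le_antisymm hsub₁ hsub₂
      · intro hNeq
        have hmem₁ : ∀ k, ζ₁ k ∈ Submodule.span ℝ (Set.range ζ₂) := by
          intro k
          rw [← hN₂, ← hNeq, hN₁]
          exact Submodule.subset_span ⟨k, rfl⟩
        have hmem₂ : ∀ j, ζ₂ j ∈ Submodule.span ℝ (Set.range ζ₁) := by
          intro j
          rw [← hN₁, hNeq, hN₂]
          exact Submodule.subset_span ⟨j, rfl⟩
        have hS₁ : S = (d₁ : ℝ) := by
          rw [hSdef]
          rw [Finset.sum_congr rfl (fun k _ => by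
            rw [show (∑ j, ⟪ζ₂ j, ζ₁ k⟫ ^ 2 : ℝ) = 1 from by
              rw [(bessel_eq_iff' d₂ ζ₂ hζ₂ (ζ₁ k)).mpr (hmem₁ k), hζ₁.1 k, one_pow]])]
          simp
        have hS₂ : S = (d₂ : ℝ) := by
          rw [hSswap]
          rw [Finset.sum_congr rfl (fun j _ => by
            rw [show (∑ k, ⟪ζ₁ k, ζ₂ j⟫ ^ 2 : ℝ) = 1 from by
              rw [(bessel_eq_iff' d₁ ζ₁ hζ₁ (ζ₂ j)).mpr (hmem₂ j), hζ₂.1 j, one_pow]])]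
          simp
        have : (d₁ : ℝ) = (d₂ : ℝ) := hS₁ ▸ hS₂ ▸ rfl
        have hdd : d₁ = d₂ := Nat.cast_injective this
        rw [hS₁, hmdef, hdd]
        simp
    · constructor
      · intro h
        have := Real.sqrt_eq_zero harg0 |>.mp h
        have : (1 / m) * S = 1 := by linarith
        field_simp at this
        linarith [this]
      · intro h
        rw [h]
        rw [show (1 : ℝ) - (1 / m) * m = 0 by field_simp; ring]
        exact Real.sqrt_zero
  · -- (c)
    rw [hDdef]
    have hsq1 : Real.sqrt (1 - (1 / m) * S) = 1 ↔ S = 0 := by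
      rw [show Real.sqrt (1 - (1 / m) * S) = 1 ↔ (1 - (1 / m) * S) = 1 from ?_]
      · constructor
        · intro h
          have : (1 / m) * S = 0 := by linarith
          rcases mul_eq_zero.mp this with h' | h'
          · exact absurd h' (by positivity)
          · exact h'
        · intro h; rw [h]; ring
      · constructor
        · intro h
          have := Real.sqrt_eq_one.mp h
          exact this
        · intro h; rw [h, Real.sqrt_one]
    rw [hsq1]
    have hzero : S = 0 ↔ ∀ k j, ⟪ζ₂ j, ζ₁ k⟫ = 0 := by
      constructor
      · intro h k j
        have h1 := (Finset.sum_eq_zero_iff_of_nonneg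
          (fun k _ => Finset.sum_nonneg fun j _ => sq_nonneg _)).mp h k (Finset.mem_univ k)
        have h2 := (Finset.sum_eq_zero_iff_of_nonneg
          (fun j _ => sq_nonneg _)).mp h1 j (Finset.mem_univ j)
        exact pow_eq_zero_iff (n := 2) (by norm_num) |>.mp h2
      · intro h
        rw [hSdef]
        exact Finset.sum_eq_zero fun k _ => Finset.sum_eq_zero fun j _ => by
          rw [h k j]; ring
    rw [hzero]
    constructor
    · intro h
      have hortho : Submodule.span ℝ (Set.range ζ₁) ⟂ Submodule.span ℝ (Set.range ζ₂) := by
        rw [Submodule.isOrtho_span]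
        rintro _ ⟨k, rfl⟩ _ ⟨j, rfl⟩
        rw [real_inner_comm]; exact h k j
      intro x hx y hy
      rw [hN₁] at hx; rw [hN₂] at hy
      exact (Submodule.mem_orthogonal' _ x).mp (hortho hx) y hy
    · intro h k j
      rw [real_inner_comm]
      exact h (ζ₁ k) (hN₁ ▸ Submodule.subset_span ⟨k, rfl⟩)
        (ζ₂ j) (hN₂ ▸ Submodule.subset_span ⟨j, rfl⟩)
  · -- (d)
    intro h
    subst h
    show Real.sqrt _ = Real.sqrt _
    congr 1
    rw [max_self]
    congr 1
    rw [Finset.sum_comm]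
    rfl
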